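/- arXiv:2504.06216 — 7 statements merged into one kernel-verified Lean document; each statement's English description precedes it below -/
import Mathlib

section
/- Let G be a simple graph in which every chordless cycle has length exactly g (for some fixed g ≥ 4). Then every cycle of G has length ℓ satisfying ℓ ≡ 2 (mod g − 2). -/
/-- A cycle (closed walk) `c` is chordless if every edge of `G` joining two vertices
of `c` is an edge of `c`. -/
def SimpleGraph.IsChordless {V : Type*} (G : SimpleGraph V) {u : V} (c : G.Walk u u) : Prop :=
  ∀ a b : V, G.Adj a b → a ∈ c.support → b ∈ c.support → s(a, b) ∈ c.edges

open SimpleGraph Walk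

private lemma mem_tail_of_mem_support_closed {V : Type*} {G : SimpleGraph V} {u x : V}
    {c : G.Walk u u} (hnil : ¬ c.Nil) (hx : x ∈ c.support) : x ∈ c.support.tail := by
  have htail : c.support.tail ≠ [] := by
    intro h
    have := c.support_eq_cons
    rw [h] at this
    exact hnil (nil_iff_support_eq.mpr this)
  rcases (by rw [c.support_eq_cons] at hx; exact List.mem_cons.mp hx : x = u ∨ x ∈ c.support.tail) with
    rfl | h
  · have hx := List.getLast_mem htail
    rwa [List.getLast_tail, c.getLast_support] at hx
  · exact h

private lemma split_cycle_paths {V : Type*} [DecidableEq V] {G : SimpleGraph V} {a b : V}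
    {c : G.Walk a a} (hc : c.IsCycle) (hb : b ∈ c.support) (hne : b ≠ a) :
    (c.takeUntil b hb).IsPath ∧ (c.dropUntil b hb).IsPath := by
  have hspec := c.take_spec hb
  set p₁ := c.takeUntil b hb with hp₁
  set p₂ := c.dropUntil b hb with hp₂
  have hsup : p₁.support ++ p₂.support.tail = c.support := by
    rw [← support_append, hspec]
  have hP : p₁.support = a :: p₁.support.tail := p₁.support_eq_cons
  have hQ : p₂.support = b :: p₂.support.tail := p₂.support_eq_cons
  have htail : c.support.tail = p₁.support.tail ++ p₂.support.tail := by
    rw [← hsup, hP]; rfl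
  have hnd : (p₁.support.tail ++ p₂.support.tail).Nodup := by
    rw [← htail]; exact hc.support_nodup
  have haQ : a ∈ p₂.support.tail := end_mem_tail_support_of_ne hne p₂
  have hbP : b ∈ p₁.support.tail := end_mem_tail_support_of_ne (Ne.symm hne) p₁
  rw [List.nodup_append] at hnd
  obtain ⟨hnd1, hnd2, hdisj⟩ := hnd
  constructor
  · apply IsPath.mk'
    rw [hP, List.nodup_cons]
    exact ⟨fun h => hdisj a h a haQ rfl, hnd1⟩
  · apply IsPath.mk'
    rw [hQ, List.nodup_cons]
    exact ⟨fun h => hdisj b hbP b h rfl, hnd2⟩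

/-- If every chordless cycle of `G` has length `g ≥ 4`, then every cycle of `G`
has length `≡ 2 (mod g - 2)`. -/
theorem stmt0 {V : Type*} [Fintype V] (G : SimpleGraph V) (g : ℕ) (hg : 4 ≤ g)
    (hchordless : ∀ (u : V) (c : G.Walk u u), c.IsCycle → G.IsChordless c → c.length = g)
    (u : V) (c : G.Walk u u) (hc : c.IsCycle) :
    c.length ≡ 2 [MOD g - 2] := by
  classical
  suffices H : ∀ n (u : V) (c : G.Walk u u), c.length = n → c.IsCycle →
      c.length ≡ 2 [MOD g - 2] from H c.length u c rfl hc
  intro n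
  induction n using Nat.strong_induction_on with
  | _ n ih =>
    intro u c hlen hc
    by_cases hch : G.IsChordless c
    · rw [hchordless u c hc hch]
      have h0 : g - 2 ≡ 0 [MOD g - 2] := (Nat.modEq_zero_iff_dvd).mpr dvd_rfl
      calc g = (g - 2) + 2 := by omega
        _ ≡ 0 + 2 [MOD g - 2] := h0.add_right 2
        _ = 2 := by omega
    · unfold SimpleGraph.IsChordless at hch
      push_neg at hch
      obtain ⟨a, b, hab, ha, hb, hne⟩ := hch
      have hnil : ¬ c.Nil := hc.not_nil
      set c' := c.rotate a ha with hc'def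
      have hcyc' : c'.IsCycle := hc.rotate ha
      have hlen' : c'.length = c.length := by
        rw [hc'def, Walk.rotate, Walk.length_append, Nat.add_comm, ← Walk.length_append,
          Walk.take_spec]
      have heb : s(a, b) ∉ c'.edges := fun h => hne ((c.rotate_edges a ha).mem_iff.mp h)
      have hbtail : b ∈ c.support.tail := mem_tail_of_mem_support_closed hnil hb
      have hbmem : b ∈ c'.support := by
        have := (Walk.support_rotate c a ha).mem_iff.mpr hbtail
        rw [c'.support_eq_cons]
        exact List.mem_cons_of_mem _ this
      have hbne : b ≠ a := hab.ne'
      obtain ⟨hp1, hp2⟩ := split_cycle_paths hcyc' hbmem hbne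
      set p₁ := c'.takeUntil b hbmem with hp₁def
      set p₂ := c'.dropUntil b hbmem with hp₂def
      have he1 : s(b, a) ∉ p₁.edges := fun h =>
        heb (c'.edges_takeUntil_subset hbmem (by rwa [Sym2.eq_swap] at h))
      have he2 : s(a, b) ∉ p₂.edges := fun h => heb (c'.edges_dropUntil_subset hbmem h)
      have hc1 : (Walk.cons hab.symm p₁).IsCycle :=
        (Walk.cons_isCycle_iff p₁ hab.symm).mpr ⟨hp1, he1⟩
      have hc2 : (Walk.cons hab p₂).IsCycle :=
        (Walk.cons_isCycle_iff p₂ hab).mpr ⟨hp2, he2⟩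
      have hsum : p₁.length + p₂.length = c.length := by
        rw [← Walk.length_append, Walk.take_spec, hlen']
      have h3a : 3 ≤ p₁.length + 1 := by
        have := hc1.three_le_length; simpa using this
      have h3b : 3 ≤ p₂.length + 1 := by
        have := hc2.three_le_length; simpa using this
      have m1 : (Walk.cons hab.symm p₁).length ≡ 2 [MOD g - 2] :=
        ih (p₁.length + 1) (by omega) b (Walk.cons hab.symm p₁) (by simp) hc1
      have m2 : (Walk.cons hab p₂).length ≡ 2 [MOD g - 2] :=
        ih (p₂.length + 1) (by omega) a (Walk.cons hab p₂) (by simp) hc2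
      rw [Walk.length_cons] at m1 m2
      have hsum2 : c.length + 2 ≡ 2 + 2 [MOD g - 2] := by
        rw [show c.length + 2 = (p₁.length + 1) + (p₂.length + 1) by omega]
        exact m1.add m2
      exact Nat.ModEq.add_right_cancel' 2 hsum2
end

section
/- Let G be the 2-clique sum of two graphs H and K along an edge e = {w₁, w₂} (formed from their disjoint union by identifying an edge of H with an edge of K). Then every cycle of G passing through some vertex u ∈ V(H) \ V(K) and some vertex v ∈ V(K) \ V(H) has a chord; in particular, no such cycle is chordless. -/
/-- A walk from a vertex of `A` to a vertex outside of `A` must pass through `A ∩ B`,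
provided every edge lies entirely in `A` or entirely in `B`. -/
lemma cross_lemma {V : Type*} {G : SimpleGraph V} {A B : Set V}
    (hsplit : ∀ a b : V, G.Adj a b → (a ∈ A ∧ b ∈ A) ∨ (a ∈ B ∧ b ∈ B)) :
    ∀ {a b : V} (p : G.Walk a b), a ∈ A → b ∉ A → ∃ s ∈ p.support, s ∈ A ∩ B := by
  intro a b p
  induction p with
  | nil => intro ha hb; exact absurd ha hb
  | @cons a c b h p ih =>
    intro ha hb
    by_cases haB : a ∈ B
    · exact ⟨a, by simp, ha, haB⟩
    · rcases hsplit _ _ h with ⟨_, hcA⟩ | ⟨haB', _⟩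
      · obtain ⟨s, hs, hsAB⟩ := ih hcA hb
        exact ⟨s, by simp [hs], hsAB⟩
      · exact absurd haB' haB

/-- For a nontrivial closed walk, every vertex of the support lies in the tail
of the support. -/
lemma mem_tail_of_closed {V : Type*} {G : SimpleGraph V} {x : V} (c : G.Walk x x)
    (hnil : ¬ c.Nil) : ∀ y ∈ c.support, y ∈ c.support.tail := by
  intro y hy
  rcases (SimpleGraph.Walk.mem_support_iff _).mp hy with rfl | hy'
  · cases c with
    | nil => exact absurd SimpleGraph.Walk.nil_nil hnil
    | cons h p => simpa using p.end_mem_support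
  · exact hy'

/-- If `G` is the 2-clique sum of two graphs with vertex sets `A` and `B`, glued along the
shared edge `{w₁, w₂}`, then every cycle passing through a vertex `u ∈ A \ B` and a
vertex `v ∈ B \ A` has a chord; i.e., it is not chordless. -/
theorem stmt2 {V : Type*} (G : SimpleGraph V) (A B : Set V) (w₁ w₂ : V) (hne : w₁ ≠ w₂)
    (hcover : A ∪ B = Set.univ) (hinter : A ∩ B = {w₁, w₂}) (hw : G.Adj w₁ w₂)
    (hsplit : ∀ a b : V, G.Adj a b → (a ∈ A ∧ b ∈ A) ∨ (a ∈ B ∧ b ∈ B))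
    (u v : V) (hu : u ∈ A \ B) (hv : v ∈ B \ A)
    (x : V) (c : G.Walk x x) (hc : c.IsCycle)
    (huc : u ∈ c.support) (hvc : v ∈ c.support) :
    ¬ G.IsChordless c := by
  classical
  intro hchord
  -- rotate the cycle to start at `u`
  set c' := c.rotate u huc with hc'def
  have hc' : c'.IsCycle := hc.rotate huc
  have hnilc : ¬ c.Nil := hc.not_nil
  have hnilc' : ¬ c'.Nil := hc'.not_nil
  -- membership in supports transfers between `c` and `c'`
  have htails : c'.support.tail ~r c.support.tail := c.support_rotate u huc
  have hmem : ∀ y, y ∈ c'.support ↔ y ∈ c.support := by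
    intro y
    constructor
    · intro h
      have := htails.perm.mem_iff.mp (mem_tail_of_closed c' hnilc' y h)
      exact List.mem_of_mem_tail this
    · intro h
      have := htails.perm.mem_iff.mpr (mem_tail_of_closed c hnilc y h)
      exact List.mem_of_mem_tail this
  have hvc' : v ∈ c'.support := (hmem v).mpr hvc
  -- split the rotated cycle at `v`
  set q := c'.takeUntil v hvc' with hq
  set r := c'.dropUntil v hvc' with hr
  have hqr : q.append r = c' := c'.take_spec hvc'
  -- crossing vertices
  obtain ⟨s₁, hs₁q, hs₁A, hs₁B⟩ := cross_lemma hsplit q hu.1 hv.2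
  have hsplit' : ∀ a b : V, G.Adj a b → (a ∈ B ∧ b ∈ B) ∨ (a ∈ A ∧ b ∈ A) := by
    intro a b h; exact (hsplit a b h).symm
  obtain ⟨s₂, hs₂r, hs₂B, hs₂A⟩ := cross_lemma hsplit' r hv.1 hu.2
  -- `s₁ ≠ u, v` and `s₂ ≠ u, v`
  have hs₁u : s₁ ≠ u := fun h => hu.2 (h ▸ hs₁B)
  have hs₁v : s₁ ≠ v := fun h => hv.2 (h ▸ hs₁A)
  have hs₂u : s₂ ≠ u := fun h => hu.2 (h ▸ hs₂B)
  have hs₂v : s₂ ≠ v := fun h => hv.2 (h ▸ hs₂A)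
  -- tail decomposition and nodup
  have htail : c'.support.tail = q.support.tail ++ r.support.tail := by
    rw [← hqr, SimpleGraph.Walk.tail_support_append]
  have hnd : c'.support.tail.Nodup := hc'.2
  rw [htail] at hnd
  have hdisj := List.disjoint_of_nodup_append hnd
  have hs₁qt : s₁ ∈ q.support.tail := by
    rcases (SimpleGraph.Walk.mem_support_iff _).mp hs₁q with h | h
    · exact absurd h hs₁u
    · exact h
  have hs₂rt : s₂ ∈ r.support.tail := by
    rcases (SimpleGraph.Walk.mem_support_iff _).mp hs₂r with h | h
    · exact absurd h hs₂v
    · exact h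
  have hs₁₂ : s₁ ≠ s₂ := by
    intro h
    exact hdisj hs₁qt (h ▸ hs₂rt)
  -- `s₁, s₂ ∈ {w₁, w₂}` and they are distinct, so `{w₁, w₂} ⊆ supports`
  have hs₁w : s₁ = w₁ ∨ s₁ = w₂ := by
    have : s₁ ∈ ({w₁, w₂} : Set V) := hinter ▸ Set.mem_inter hs₁A hs₁B
    simpa using this
  have hs₂w : s₂ = w₁ ∨ s₂ = w₂ := by
    have : s₂ ∈ ({w₁, w₂} : Set V) := hinter ▸ Set.mem_inter hs₂A hs₂B
    simpa using this
  have hw1supp : w₁ ∈ c.support ∧ w₂ ∈ c.support := by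
    have h1 : s₁ ∈ c.support := (hmem s₁).mp (hqr ▸ (SimpleGraph.Walk.mem_support_append_iff _ _).mpr (Or.inl hs₁q))
    have h2 : s₂ ∈ c.support := (hmem s₂).mp (hqr ▸ (SimpleGraph.Walk.mem_support_append_iff _ _).mpr (Or.inr hs₂r))
    rcases hs₁w with rfl | rfl <;> rcases hs₂w with rfl | rfl
    · exact absurd rfl hs₁₂
    · exact ⟨h1, h2⟩
    · exact ⟨h2, h1⟩
    · exact absurd rfl hs₁₂
  -- the chord
  have hedge : s(w₁, w₂) ∈ c.edges := hchord w₁ w₂ hw hw1supp.1 hw1supp.2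
  have hedge' : s(w₁, w₂) ∈ c'.edges := (c.rotate_edges u huc).perm.mem_iff.mpr hedge
  rw [← hqr, SimpleGraph.Walk.edges_append, List.mem_append] at hedge'
  -- both endpoints of an edge of a walk lie in its support; derive a contradiction
  rcases hedge' with h | h
  · -- both `w₁, w₂ ∈ q.support`, but one of them is `s₂ ∈ r.support.tail`
    have h1 : w₁ ∈ q.support := SimpleGraph.Walk.fst_mem_support_of_mem_edges q h
    have h2 : w₂ ∈ q.support := SimpleGraph.Walk.snd_mem_support_of_mem_edges q h
    have hs₂q : s₂ ∈ q.support := by rcases hs₂w with rfl | rfl <;> assumption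
    have : s₂ ∈ q.support.tail := by
      rcases (SimpleGraph.Walk.mem_support_iff _).mp hs₂q with hh | hh
      · exact absurd hh hs₂u
      · exact hh
    exact hdisj this hs₂rt
  · have h1 : w₁ ∈ r.support := SimpleGraph.Walk.fst_mem_support_of_mem_edges r h
    have h2 : w₂ ∈ r.support := SimpleGraph.Walk.snd_mem_support_of_mem_edges r h
    have hs₁r : s₁ ∈ r.support := by rcases hs₁w with rfl | rfl <;> assumption
    have : s₁ ∈ r.support.tail := by
      rcases (SimpleGraph.Walk.mem_support_iff _).mp hs₁r with hh | hh
      · exact absurd hh hs₁v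
      · exact hh
    exact hdisj hs₁qt this
end

section
/- Let A = {10, 15, 42} and let I_A ⊆ K[x₁, x₂, x₃] be the kernel of the map x₁ ↦ t¹⁰, x₂ ↦ t¹⁵, x₃ ↦ t⁴². Then I_A = ⟨x₁³ − x₂², x₃⁵ − x₁¹⁸x₂²⟩. -/
open MvPolynomial

namespace Stmt8Aux

variable {K : Type*} [Field K]

/-- weighted degree of an exponent vector -/
def d (m : Fin 3 →₀ ℕ) : ℕ := 10 * m 0 + 15 * m 1 + 42 * m 2

/-- normal form of an exponent vector modulo the relations `x₂² = x₁³`, `x₃⁵ = x₁²¹` -/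
noncomputable def nf (m : Fin 3 →₀ ℕ) : Fin 3 →₀ ℕ :=
  Finsupp.equivFunOnFinite.symm ![m 0 + 3 * (m 1 / 2) + 21 * (m 2 / 5), m 1 % 2, m 2 % 5]

lemma nf_apply (m : Fin 3 →₀ ℕ) :
    nf m 0 = m 0 + 3 * (m 1 / 2) + 21 * (m 2 / 5) ∧ nf m 1 = m 1 % 2 ∧ nf m 2 = m 2 % 5 := by
  refine ⟨?_, ?_, ?_⟩ <;> simp [nf]

lemma d_nf (m : Fin 3 →₀ ℕ) : d (nf m) = d m := by
  obtain ⟨h0, h1, h2⟩ := nf_apply m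
  simp only [d, h0, h1, h2]
  omega

lemma monomial_eq' (m : Fin 3 →₀ ℕ) (r : K) :
    (monomial m r : MvPolynomial (Fin 3) K) = C r * X 0 ^ m 0 * X 1 ^ m 1 * X 2 ^ m 2 := by
  rw [MvPolynomial.monomial_eq, Finsupp.prod_fintype _ _ (fun i => pow_zero _),
    Fin.prod_univ_three]
  ring

noncomputable def J (K : Type*) [Field K] : Ideal (MvPolynomial (Fin 3) K) :=
  Ideal.span {X 0 ^ 3 - X 1 ^ 2, X 2 ^ 5 - X 0 ^ 18 * X 1 ^ 2}

lemma g1_mem : (X 0 ^ 3 - X 1 ^ 2 : MvPolynomial (Fin 3) K) ∈ J K :=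
  Ideal.subset_span (by left; rfl)

lemma g1'_mem : (X 1 ^ 2 - X 0 ^ 3 : MvPolynomial (Fin 3) K) ∈ J K := by
  have : (X 1 ^ 2 - X 0 ^ 3 : MvPolynomial (Fin 3) K) = (-1) * (X 0 ^ 3 - X 1 ^ 2) := by ring
  rw [this]
  exact Ideal.mul_mem_left _ _ g1_mem

lemma g2_mem : (X 2 ^ 5 - X 0 ^ 18 * X 1 ^ 2 : MvPolynomial (Fin 3) K) ∈ J K :=
  Ideal.subset_span (by right; rfl)

lemma g3_mem : (X 2 ^ 5 - X 0 ^ 21 : MvPolynomial (Fin 3) K) ∈ J K := by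
  have : (X 2 ^ 5 - X 0 ^ 21 : MvPolynomial (Fin 3) K)
      = (X 2 ^ 5 - X 0 ^ 18 * X 1 ^ 2) + X 0 ^ 18 * (X 1 ^ 2 - X 0 ^ 3) := by ring
  rw [this]
  exact Ideal.add_mem _ g2_mem (Ideal.mul_mem_left _ _ g1'_mem)

lemma pow_sub_mem {x y : MvPolynomial (Fin 3) K} (h : x - y ∈ J K) (n : ℕ) :
    x ^ n - y ^ n ∈ J K := by
  obtain ⟨s, hs⟩ := sub_dvd_pow_sub_pow x y n
  rw [hs]
  exact Ideal.mul_mem_right _ _ h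

lemma gen_mem (A q1 r1 q2 r2 : ℕ) (r : K) :
    (C r * X 0 ^ A * X 1 ^ (2 * q1 + r1) * X 2 ^ (5 * q2 + r2)
      - C r * X 0 ^ (A + 3 * q1 + 21 * q2) * X 1 ^ r1 * X 2 ^ r2
      : MvPolynomial (Fin 3) K) ∈ J K := by
  have key : (C r * X 0 ^ A * X 1 ^ (2 * q1 + r1) * X 2 ^ (5 * q2 + r2)
      - C r * X 0 ^ (A + 3 * q1 + 21 * q2) * X 1 ^ r1 * X 2 ^ r2
      : MvPolynomial (Fin 3) K)
      = (C r * X 0 ^ A * X 2 ^ (5 * q2 + r2) * X 1 ^ r1) * ((X 1 ^ 2) ^ q1 - (X 0 ^ 3) ^ q1)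
        + (C r * X 0 ^ (A + 3 * q1) * X 1 ^ r1 * X 2 ^ r2)
          * ((X 2 ^ 5) ^ q2 - (X 0 ^ 21) ^ q2) := by
    ring
  rw [key]
  exact Ideal.add_mem _ (Ideal.mul_mem_left _ _ (pow_sub_mem g1'_mem _))
    (Ideal.mul_mem_left _ _ (pow_sub_mem g3_mem _))

lemma monomial_sub_nf_mem (m : Fin 3 →₀ ℕ) (r : K) :
    (monomial m r - monomial (nf m) r : MvPolynomial (Fin 3) K) ∈ J K := by
  obtain ⟨h0, h1, h2⟩ := nf_apply m
  rw [monomial_eq', monomial_eq', h0, h1, h2]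
  have hb : m 1 = 2 * (m 1 / 2) + m 1 % 2 := by omega
  have hc : m 2 = 5 * (m 2 / 5) + m 2 % 5 := by omega
  nth_rewrite 1 [hb]
  nth_rewrite 1 [hc]
  exact gen_mem (m 0) (m 1 / 2) (m 1 % 2) (m 2 / 5) (m 2 % 5) r

lemma nf_normal (m : Fin 3 →₀ ℕ) : nf m 1 < 2 ∧ nf m 2 < 5 := by
  obtain ⟨-, h1, h2⟩ := nf_apply m
  omega

lemma d_inj {μ ν : Fin 3 →₀ ℕ} (hμ1 : μ 1 < 2) (hμ2 : μ 2 < 5) (hν1 : ν 1 < 2)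
    (hν2 : ν 2 < 5) (h : d μ = d ν) : μ = ν := by
  unfold d at h
  have e0 : μ 0 = ν 0 := by omega
  have e1 : μ 1 = ν 1 := by omega
  have e2 : μ 2 = ν 2 := by omega
  ext i
  fin_cases i
  · exact e0
  · exact e1
  · exact e2

lemma aeval_monomial' (m : Fin 3 →₀ ℕ) (r : K) :
    aeval (fun i => Polynomial.X ^ (![10, 15, 42] i)) (monomial m r)
      = Polynomial.C r * Polynomial.X ^ d m := by
  rw [MvPolynomial.aeval_monomial, Finsupp.prod_fintype _ _ (fun i => pow_zero _),
    Fin.prod_univ_three]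
  simp only [Matrix.cons_val_zero, Matrix.cons_val_one, Matrix.head_cons, Matrix.cons_val_two,
    Matrix.tail_cons, ← pow_mul, ← pow_add, Polynomial.algebraMap_eq, d]

lemma aeval_eq_sum (p : MvPolynomial (Fin 3) K) :
    aeval (fun i => (Polynomial.X : Polynomial K) ^ (![10, 15, 42] i)) p
      = ∑ m ∈ p.support, Polynomial.C (coeff m p) * Polynomial.X ^ d m := by
  conv_lhs => rw [MvPolynomial.as_sum p]
  rw [map_sum]
  exact Finset.sum_congr rfl fun m _ => aeval_monomial' m _

/-- injectivity on normal-form polynomials -/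
lemma normal_eq_zero (q : MvPolynomial (Fin 3) K)
    (hq : ∀ μ ∈ q.support, μ 1 < 2 ∧ μ 2 < 5)
    (h0 : aeval (fun i => (Polynomial.X : Polynomial K) ^ (![10, 15, 42] i)) q = 0) : q = 0 := by
  by_contra hne
  obtain ⟨μ0, hμ0⟩ := MvPolynomial.support_nonempty.mpr hne
  have hcoeff : Polynomial.coeff
      (aeval (fun i => (Polynomial.X : Polynomial K) ^ (![10, 15, 42] i)) q) (d μ0)
      = coeff μ0 q := by
    rw [aeval_eq_sum, Polynomial.finset_sum_coeff]
    rw [Finset.sum_eq_single μ0]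
    · simp [Polynomial.coeff_C_mul, Polynomial.coeff_X_pow]
    · intro μ hμ hne'
      have hd : d μ ≠ d μ0 := fun hdd => hne' (d_inj (hq μ hμ).1 (hq μ hμ).2
        (hq μ0 hμ0).1 (hq μ0 hμ0).2 hdd)
      simp [Polynomial.coeff_C_mul, Polynomial.coeff_X_pow, Ne.symm hd]
    · intro h; exact absurd hμ0 h
  rw [h0] at hcoeff
  exact (MvPolynomial.mem_support_iff.mp hμ0) hcoeff.symm

end Stmt8Aux

open Stmt8Aux in
open MvPolynomial in
/-- The toric ideal of `A = {10, 15, 42}` — the kernel of the `K`-algebra map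
`x₁ ↦ t¹⁰, x₂ ↦ t¹⁵, x₃ ↦ t⁴²` — is generated by `x₁³ − x₂²` and `x₃⁵ − x₁¹⁸x₂²`. -/
theorem stmt8 (K : Type*) [Field K] :
    ∀ φ : MvPolynomial (Fin 3) K →ₐ[K] Polynomial K,
      φ = aeval (fun i => Polynomial.X ^ (![10, 15, 42] i)) →
      RingHom.ker φ = Ideal.span {X 0 ^ 3 - X 1 ^ 2, X 2 ^ 5 - X 0 ^ 18 * X 1 ^ 2} := by
  intro φ hφ
  subst hφ
  apply le_antisymm
  · -- ker ⊆ span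
    intro p hp
    have hp0 : aeval (fun i => (Polynomial.X : Polynomial K) ^ (![10, 15, 42] i)) p = 0 :=
      RingHom.mem_ker.mp hp
    set q : MvPolynomial (Fin 3) K :=
      ∑ m ∈ p.support, monomial (nf m) (coeff m p) with hq_def
    have h1 : p - q ∈ J K := by
      have heq : p - q
          = ∑ m ∈ p.support, (monomial m (coeff m p) - monomial (nf m) (coeff m p)) := by
        rw [Finset.sum_sub_distrib, hq_def, ← MvPolynomial.as_sum]
      rw [heq]
      exact Ideal.sum_mem _ fun m _ => monomial_sub_nf_mem m _
    have h2 : aeval (fun i => (Polynomial.X : Polynomial K) ^ (![10, 15, 42] i)) q = 0 := by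
      rw [hq_def, map_sum]
      calc (∑ m ∈ p.support,
            aeval (fun i => (Polynomial.X : Polynomial K) ^ (![10, 15, 42] i))
              (monomial (nf m) (coeff m p)))
          = ∑ m ∈ p.support, Polynomial.C (coeff m p) * Polynomial.X ^ d m := by
            refine Finset.sum_congr rfl fun m _ => ?_
            rw [aeval_monomial', d_nf]
        _ = aeval (fun i => (Polynomial.X : Polynomial K) ^ (![10, 15, 42] i)) p :=
            (aeval_eq_sum p).symm
        _ = 0 := hp0
    have hsupp : ∀ μ ∈ q.support, μ 1 < 2 ∧ μ 2 < 5 := by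
      intro μ hμ
      have := MvPolynomial.support_sum hμ
      obtain ⟨m, -, hm⟩ := Finset.mem_biUnion.mp this
      have : μ = nf m := by
        have h' := MvPolynomial.support_monomial_subset hm
        simpa using h'
      rw [this]
      exact nf_normal m
    have h3 : q = 0 := normal_eq_zero q hsupp h2
    have : p ∈ J K := by simpa [h3] using h1
    exact this
  · -- span ⊆ ker
    rw [Ideal.span_le]
    rintro g (rfl | rfl)
    · rw [SetLike.mem_coe, RingHom.mem_ker]
      simp only [map_sub, map_pow, aeval_X]
      norm_num [← pow_mul]
    · rw [SetLike.mem_coe, RingHom.mem_ker]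
      simp only [map_sub, map_pow, map_mul, aeval_X]
      norm_num [← pow_mul, ← pow_add, Matrix.cons_val_two, Matrix.tail_cons, Matrix.head_cons]
end

section
/- Let I be an ideal of a polynomial ring R = K[x₁,…,x_m] over a field K, let ≽ be a monomial order, and let f, g be distinct elements of the reduced Gröbner basis of I with respect to ≽, with f = x^λ − x^μ, g = x^α − x^μ binomials sharing the trailing term x^μ. Then gcd(x^λ, x^α) = 1. -/
open MvPolynomial

variable {σ : Type*} {K : Type*} [Field K]

/-- `d` is the exponent of the leading term of `f` with respect to the monomial order `m`. -/
def IsLeadExp (m : MonomialOrder σ) (f : MvPolynomial σ K) (d : σ →₀ ℕ) : Prop :=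
  d ∈ f.support ∧ ∀ e ∈ f.support, m.toSyn e ≤ m.toSyn d

/-- `G` is a Gröbner basis of `I` w.r.t. `m`: it is contained in `I` and the leading term of
every nonzero element of `I` is divisible by the leading term of some element of `G`. -/
def IsGroebnerBasis (m : MonomialOrder σ) (I : Ideal (MvPolynomial σ K))
    (G : Set (MvPolynomial σ K)) : Prop :=
  G ⊆ (I : Set (MvPolynomial σ K)) ∧
    ∀ f ∈ I, f ≠ 0 → ∃ g ∈ G, ∃ d e : σ →₀ ℕ, IsLeadExp m g d ∧ IsLeadExp m f e ∧ d ≤ e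

/-- `G` is the reduced Gröbner basis of `I` w.r.t. `m`: a Gröbner basis consisting of monic
polynomials, such that no monomial appearing in an element of `G` is divisible by the leading
term of another element of `G`. -/
def IsReducedGroebnerBasis (m : MonomialOrder σ) (I : Ideal (MvPolynomial σ K))
    (G : Set (MvPolynomial σ K)) : Prop :=
  IsGroebnerBasis m I G ∧
    (∀ g ∈ G, ∀ d : σ →₀ ℕ, IsLeadExp m g d → coeff d g = 1) ∧
    (∀ g ∈ G, ∀ g' ∈ G, g ≠ g' → ∀ d : σ →₀ ℕ, IsLeadExp m g' d → ∀ e ∈ g.support, ¬ d ≤ e)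

lemma leadExp_unique {m : MonomialOrder σ} {f : MvPolynomial σ K} {d d' : σ →₀ ℕ}
    (h : IsLeadExp m f d) (h' : IsLeadExp m f d') : d = d' := by
  have h1 := h'.2 d h.1
  have h2 := h.2 d' h'.1
  exact m.toSyn.injective (le_antisymm h1 h2)

lemma aux_noDiv {m : MonomialOrder σ} {G : Set (MvPolynomial σ K)}
    (hred : ∀ g ∈ G, ∀ g' ∈ G, g ≠ g' → ∀ d : σ →₀ ℕ, IsLeadExp m g' d →
      ∀ e ∈ g.support, ¬ d ≤ e)
    {f : MvPolynomial σ K} (hf : f ∈ G) {lam : σ →₀ ℕ} (hflead : IsLeadExp m f lam)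
    {u : MvPolynomial σ K} (hu : u ∈ G) {d : σ →₀ ℕ} (hud : IsLeadExp m u d)
    (hdl : d ≤ lam) (hne : d ≠ lam) : False := by
  by_cases huf : u = f
  · subst huf
    exact hne (leadExp_unique hud hflead)
  · exact hred f hf u hu (fun h => huf h.symm) d hud lam hflead.1 hdl

/-- If `f = x^λ − x^μ` and `g = x^α − x^μ` are distinct elements of the reduced Gröbner basis
of a prime binomial ideal `I` containing no variable, with leading terms `x^λ` and `x^α` and
the same trailing term `x^μ`, then `gcd(x^λ, x^α) = 1`. -/
theorem stmt11 (m : MonomialOrder σ) (I : Ideal (MvPolynomial σ K))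
    (hprime : I.IsPrime) (hvar : ∀ i : σ, X i ∉ I)
    (G : Set (MvPolynomial σ K)) (hG : IsReducedGroebnerBasis m I G)
    (f g : MvPolynomial σ K) (hf : f ∈ G) (hg : g ∈ G) (hfg : f ≠ g)
    (lam mu alf : σ →₀ ℕ)
    (hfeq : f = monomial lam 1 - monomial mu 1)
    (hgeq : g = monomial alf 1 - monomial mu 1)
    (hflead : IsLeadExp m f lam) (hglead : IsLeadExp m g alf) :
    ∀ i : σ, min (lam i) (alf i) = 0 := by
  classical
  intro i
  by_contra h0
  have hl1 : 0 < lam i := lt_of_lt_of_le (Nat.pos_of_ne_zero h0) (min_le_left _ _)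
  have ha1 : 0 < alf i := lt_of_lt_of_le (Nat.pos_of_ne_zero h0) (min_le_right _ _)
  have hla : lam ≠ alf := by
    intro h
    exact hfg (by rw [hfeq, hgeq, h])
  -- the quotient monomial exponents
  set lam' : σ →₀ ℕ := lam - Finsupp.single i 1 with hlam'
  set alf' : σ →₀ ℕ := alf - Finsupp.single i 1 with half'
  have hsl : Finsupp.single i 1 ≤ lam := Finsupp.single_le_iff.mpr hl1
  have hsa : Finsupp.single i 1 ≤ alf := Finsupp.single_le_iff.mpr ha1
  have hlcan : Finsupp.single i 1 + lam' = lam := add_tsub_cancel_of_le hsl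
  have hacan : Finsupp.single i 1 + alf' = alf := add_tsub_cancel_of_le hsa
  have hla' : lam' ≠ alf' := by
    intro h
    apply hla
    rw [← hlcan, ← hacan, h]
  set h : MvPolynomial σ K := monomial lam' 1 - monomial alf' 1 with hh
  have hmul : X i * h = f - g := by
    rw [hh, hfeq, hgeq, mul_sub, X, monomial_mul, monomial_mul, hlcan, hacan, one_mul]
    ring
  have hXhI : X i * h ∈ I := by
    rw [hmul]
    exact I.sub_mem (hG.1.1 hf) (hG.1.1 hg)
  have hhI : h ∈ I := (hprime.mem_or_mem hXhI).resolve_left (hvar i)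
  have hh0 : h ≠ 0 := by
    intro hz
    have hc1 : coeff lam' h = 1 := by
      simp [hh, coeff_monomial, Ne.symm hla']
    rw [hz, coeff_zero] at hc1
    exact one_ne_zero hc1.symm
  obtain ⟨u, hu, d, e, hud, hhe, hde⟩ := hG.1.2 h hhI hh0
  have hesup := hhe.1
  rw [mem_support_iff, hh, coeff_sub, coeff_monomial, coeff_monomial] at hesup
  have hecase : e = lam' ∨ e = alf' := by
    by_contra hc
    push_neg at hc
    rw [if_neg (Ne.symm hc.1), if_neg (Ne.symm hc.2), sub_zero] at hesup
    exact hesup rfl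
  rcases hecase with he | he
  · subst he
    have hdl : d ≤ lam := le_trans hde tsub_le_self
    have hne : d ≠ lam := by
      intro hdeq
      have h1 : d i ≤ lam' i := hde i
      rw [hlam', Finsupp.tsub_apply, Finsupp.single_eq_same, hdeq] at h1
      omega
    exact aux_noDiv hG.2.2 hf hflead hu hud hdl hne
  · subst he
    have hdl : d ≤ alf := le_trans hde tsub_le_self
    have hne : d ≠ alf := by
      intro hdeq
      have h1 : d i ≤ alf' i := hde i
      rw [half', Finsupp.tsub_apply, Finsupp.single_eq_same, hdeq] at h1
      omega
    exact aux_noDiv hG.2.2 hg hglead hu hud hdl hne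
end

section
/- Let k ≥ 3 and let G be a graph that is an iterated 2-clique sum of theta graphs Θ_{r_i}^k (r_i ≥ 2). Then every chordless cycle of G has length 2k. -/
open SimpleGraph Walk


/-- The theta graph `Θ_r^k` : two base points joined by `r` internally vertex-disjoint
paths of length `k`. -/
def thetaGraph (r k : ℕ) : SimpleGraph (Fin 2 ⊕ Fin r × Fin (k - 1)) :=
  SimpleGraph.fromRel (fun x y =>
    match x, y with
    | Sum.inl a, Sum.inr (_, j) => (a = 0 ∧ (j : ℕ) = 0) ∨ (a = 1 ∧ (j : ℕ) + 2 = k)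
    | Sum.inr (i, j), Sum.inr (i', j') => i = i' ∧ (j : ℕ) + 1 = (j' : ℕ)
    | _, _ => False)

variable {V : Type*} {G : SimpleGraph V}

/-- In a path, the only edge at the start vertex is the first edge. -/
lemma path_start_edge {u w : V} (q : G.Walk u w) (hq : q.IsPath) (t : V) :
    s(u, t) ∈ q.edges ↔ ¬ q.Nil ∧ t = q.getVert 1 := by
  cases q with
  | nil => simp
  | cons h r =>
    rename_i b
    simp only [Walk.edges_cons, List.mem_cons]
    have hb : u ∉ r.support := by
      have := hq.support_nodup
      simp only [Walk.support_cons, List.nodup_cons] at this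
      exact this.1
    constructor
    · rintro (he | he)
      · rw [Sym2.eq_iff] at he
        rcases he with ⟨-, rfl⟩ | ⟨h1, rfl⟩
        · simp
        · exact absurd (h1 ▸ h) (G.loopless.irrefl _)
      · exact absurd (Walk.fst_mem_support_of_mem_edges r he) hb
    · rintro ⟨-, rfl⟩
      left
      simp

/-- In a path, the only edge at the end vertex is the last edge. -/
lemma path_end_edge {u w : V} (q : G.Walk u w) (hq : q.IsPath) (t : V) :
    s(w, t) ∈ q.edges ↔ ¬ q.Nil ∧ t = q.reverse.getVert 1 := by
  have := path_start_edge q.reverse hq.reverse t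
  rw [Walk.edges_reverse, List.mem_reverse] at this
  rw [this]
  simp [Walk.nil_iff_length_eq, Walk.length_reverse, -Walk.length_eq_zero_iff]

/-- A vertex on a cycle has exactly two neighbors along the cycle. -/
lemma cycle_two_nbrs {x v : V} (c : G.Walk x x) (hc : c.IsCycle)
    (hv : v ∈ c.support) :
    ∃ t₁ t₂ : V, t₁ ≠ t₂ ∧ ∀ t, (s(v, t) ∈ c.edges ↔ t = t₁ ∨ t = t₂) := by
  classical
  have hrot : ∀ t, s(v, t) ∈ (c.rotate v hv).edges ↔ s(v, t) ∈ c.edges :=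
    fun t => (Walk.rotate_edges c v hv).mem_iff
  have hc' : (c.rotate v hv).IsCycle := hc.rotate (u := v) hv
  set d := c.rotate v hv with hd
  clear_value d
  cases d with
  | nil => exact absurd hc' (Walk.IsCycle.not_of_nil)
  | cons h q =>
    rename_i b
    rw [Walk.cons_isCycle_iff] at hc'
    obtain ⟨hq, hvb⟩ := hc'
    have hqnil : ¬ q.Nil := by
      intro hnil
      exact h.ne (hnil.eq.symm ▸ rfl) |>.elim
    refine ⟨b, q.reverse.getVert 1, ?_, ?_⟩
    · intro heq
      exact hvb ((path_end_edge q hq b).2 ⟨hqnil, heq⟩)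
    · intro t
      rw [← hrot t]
      simp only [Walk.edges_cons, List.mem_cons]
      constructor
      · rintro (he | he)
        · rw [Sym2.eq_iff] at he
          rcases he with ⟨-, rfl⟩ | ⟨h1, rfl⟩
          · exact Or.inl rfl
          · exact absurd (h1 ▸ h) (G.loopless.irrefl _)
        · exact Or.inr ((path_end_edge q hq t).1 he).2
      · rintro (rfl | rfl)
        · exact Or.inl rfl
        · exact Or.inr ((path_end_edge q hq _).2 ⟨hqnil, rfl⟩)

lemma mem_support_tail_iff {x : V} (c : G.Walk x x) (hn : ¬ c.Nil) (v : V) :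
    v ∈ c.support.tail ↔ v ∈ c.support := by
  constructor
  · exact fun h => List.mem_of_mem_tail h
  · intro h
    rw [← Walk.support_tail_of_not_nil c hn]
    rcases List.mem_cons.1 ((Walk.cons_support_tail hn) ▸ h) with rfl | h'
    · rw [Walk.support_tail_of_not_nil c hn, ← Walk.support_tail_of_not_nil c hn]
      exact c.tail.end_mem_support
    · exact h'

/-- Three distinct edges of a cycle cannot share a common vertex. -/
lemma three_edges {x w : V} {c : G.Walk x x} (hc : c.IsCycle) {a b d : V}
    (ha : s(w, a) ∈ c.edges) (hb : s(w, b) ∈ c.edges) (hd : s(w, d) ∈ c.edges)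
    (hab : a ≠ b) (had : a ≠ d) (hbd : b ≠ d) : False := by
  have hw : w ∈ c.support := Walk.fst_mem_support_of_mem_edges c ha
  obtain ⟨t₁, t₂, hne, hiff⟩ := cycle_two_nbrs c hc hw
  rcases (hiff a).1 ha with rfl | rfl <;> rcases (hiff b).1 hb with rfl | rfl <;>
    rcases (hiff d).1 hd with rfl | rfl <;> simp_all

/-- Crossing lemma : a walk from inside `A` to outside `A` uses an edge leaving `A`. -/
lemma exists_crossing_edge {A : Set V} :
    ∀ {u v : V} (p : G.Walk u v), u ∈ A → v ∉ A →
      ∃ s t, s ∈ A ∧ t ∉ A ∧ s(s, t) ∈ p.edges := by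
  intro u v p
  induction p with
  | nil => intro hu hv; exact absurd hu hv
  | cons h q ih =>
    rename_i u' b w'
    intro hu hv
    by_cases hb : b ∈ A
    · obtain ⟨s, t, hs, ht, he⟩ := ih hb hv
      exact ⟨s, t, hs, ht, by simp [he]⟩
    · exact ⟨u', b, hu, hb, by simp⟩

/-- A chordless cycle in a 2-clique sum lies entirely in one of the two sides. -/
lemma cycle_in_side {A B : Set V} {w₁ w₂ : V}
    (hcover : A ∪ B = Set.univ) (hinter : A ∩ B = {w₁, w₂}) (hw : G.Adj w₁ w₂)
    (hsplit : ∀ a b : V, G.Adj a b → (a ∈ A ∧ b ∈ A) ∨ (a ∈ B ∧ b ∈ B))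
    {x : V} (c : G.Walk x x) (hc : c.IsCycle) (hcl : G.IsChordless c) :
    (∀ v ∈ c.support, v ∈ A) ∨ (∀ v ∈ c.support, v ∈ B) := by
  classical
  by_contra hcon
  push_neg at hcon
  obtain ⟨⟨a, has, haA⟩, ⟨b, hbs, hbB⟩⟩ := hcon
  have hmemAB : ∀ v : V, v ∈ A ∨ v ∈ B := by
    intro v
    have : v ∈ A ∪ B := by rw [hcover]; trivial
    exact this
  have hbA : b ∈ A := (hmemAB b).resolve_right hbB
  have haB : a ∈ B := (hmemAB a).resolve_left haA
  have hAB : ∀ s : V, s ∈ A → s ∈ B → s = w₁ ∨ s = w₂ := by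
    intro s hsA hsB
    have : s ∈ A ∩ B := ⟨hsA, hsB⟩
    rw [hinter] at this
    exact this
  have hwA : w₁ ∈ A ∧ w₂ ∈ A ∧ w₁ ∈ B ∧ w₂ ∈ B := by
    have h1 : w₁ ∈ A ∩ B := by rw [hinter]; left; rfl
    have h2 : w₂ ∈ A ∩ B := by rw [hinter]; right; rfl
    exact ⟨h1.1, h2.1, h1.2, h2.2⟩
  -- rotate the cycle to start at b
  set c₁ := c.rotate b hbs with hc₁def
  have hc₁ : c₁.IsCycle := hc.rotate (u := b) hbs
  have hedges : ∀ e, e ∈ c₁.edges ↔ e ∈ c.edges := fun e => (Walk.rotate_edges c b hbs).mem_iff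
  have hnn : ¬ c.Nil := hc.not_nil
  have hnn₁ : ¬ c₁.Nil := hc₁.not_nil
  have ha₁ : a ∈ c₁.support := by
    rw [← mem_support_tail_iff c₁ hnn₁]
    rw [(Walk.support_rotate c b hbs).mem_iff]
    rw [mem_support_tail_iff c hnn]
    exact has
  set p₁ := c₁.takeUntil a ha₁ with hp₁def
  set p₂ := c₁.dropUntil a ha₁ with hp₂def
  have hspec : p₁.append p₂ = c₁ := Walk.take_spec c₁ ha₁
  have hdisj : ∀ e, e ∈ p₁.edges → e ∈ p₂.edges → False := by
    have : (p₁.append p₂).edges.Nodup := by rw [hspec]; exact hc₁.isCircuit.isTrail.edges_nodup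
    rw [Walk.edges_append] at this
    intro e h1 h2
    exact (List.disjoint_of_nodup_append this) h1 h2
  have hp₁e : ∀ e, e ∈ p₁.edges → e ∈ c.edges := fun e he =>
    (hedges e).1 (Walk.edges_takeUntil_subset c₁ ha₁ he)
  have hp₂e : ∀ e, e ∈ p₂.edges → e ∈ c.edges := fun e he =>
    (hedges e).1 (Walk.edges_dropUntil_subset c₁ ha₁ he)
  -- three crossing edges
  obtain ⟨s₁, t₁, hs₁A, ht₁A, he₁⟩ := exists_crossing_edge (A := A) p₁ hbA haA
  obtain ⟨s₂, t₂, hs₂B, ht₂B, he₂⟩ := exists_crossing_edge (A := B) p₂ haB hbB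
  obtain ⟨s₃, t₃, hs₃A, ht₃A, he₃⟩ := exists_crossing_edge (A := Aᶜ) p₂ haA (by simpa using hbA)
  rw [Set.mem_compl_iff] at hs₃A
  have ht₃A' : t₃ ∈ A := by simpa using ht₃A
  have he₁c : s(s₁, t₁) ∈ c.edges := hp₁e _ he₁
  have he₂c : s(s₂, t₂) ∈ c.edges := hp₂e _ he₂
  have he₃c : s(s₃, t₃) ∈ c.edges := hp₂e _ he₃
  have hadj : ∀ {s t : V}, s(s, t) ∈ c.edges → G.Adj s t := fun h => c.adj_of_mem_edges h
  -- classify the crossing edges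
  have h1B : s₁ ∈ B ∧ t₁ ∈ B := by
    rcases hsplit _ _ (hadj he₁c) with ⟨-, h⟩ | h
    · exact absurd h ht₁A
    · exact h
  have h3B : s₃ ∈ B ∧ t₃ ∈ B := by
    rcases hsplit _ _ (hadj he₃c) with ⟨h, -⟩ | h
    · exact absurd h hs₃A
    · exact h
  have h2A : s₂ ∈ A ∧ t₂ ∈ A := by
    rcases hsplit _ _ (hadj he₂c) with h | ⟨-, h⟩
    · exact h
    · exact absurd h ht₂B
  have hs₁w : s₁ = w₁ ∨ s₁ = w₂ := hAB s₁ hs₁A h1B.1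
  have hs₂w : s₂ = w₁ ∨ s₂ = w₂ := hAB s₂ h2A.1 hs₂B
  have ht₃w : t₃ = w₁ ∨ t₃ = w₂ := hAB t₃ ht₃A' h3B.2
  -- distinctness of the three crossing edges
  have hne12 : s(s₁, t₁) ≠ s(s₂, t₂) := by
    intro h
    exact hdisj _ he₁ (h ▸ he₂)
  have hne13 : s(s₁, t₁) ≠ s(s₃, t₃) := by
    intro h
    exact hdisj _ he₁ (h ▸ he₃)
  have hne23 : s(s₂, t₂) ≠ s(s₃, t₃) := by
    intro h
    rw [Sym2.eq_iff] at h
    rcases h with ⟨h1, h2⟩ | ⟨h1, h2⟩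
    · exact hs₃A (h1 ▸ h2A.1)
    · exact hs₃A (h2 ▸ h2A.2)
  have he₃c' : s(t₃, s₃) ∈ c.edges := by rw [Sym2.eq_swap]; exact he₃c
  have hs₁supp : s₁ ∈ c.support := Walk.fst_mem_support_of_mem_edges c he₁c
  have hs₂supp : s₂ ∈ c.support := Walk.fst_mem_support_of_mem_edges c he₂c
  have ht₃supp : t₃ ∈ c.support := Walk.fst_mem_support_of_mem_edges c he₃c'
  -- various inequalities between "other" endpoints
  have h12 : t₁ ≠ t₂ := fun h => ht₁A (h ▸ h2A.2)
  have h23 : t₂ ≠ s₃ := fun h => hs₃A (h ▸ h2A.2)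
  have h13 : s₁ = t₃ → t₁ ≠ s₃ := fun he h => hne13 (by rw [he, h, Sym2.eq_swap])
  have ht₁w₁ : t₁ ≠ w₁ := fun h => ht₁A (h ▸ hwA.1)
  have ht₁w₂ : t₁ ≠ w₂ := fun h => ht₁A (h ▸ hwA.2.1)
  have ht₂w₁ : t₂ ≠ w₁ := fun h => ht₂B (h ▸ hwA.2.2.1)
  have ht₂w₂ : t₂ ≠ w₂ := fun h => ht₂B (h ▸ hwA.2.2.2)
  have hs₃w₁ : s₃ ≠ w₁ := fun h => hs₃A (h ▸ hwA.1)
  have hs₃w₂ : s₃ ≠ w₂ := fun h => hs₃A (h ▸ hwA.2.1)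
  -- both w₁ and w₂ lie on the cycle
  have hw1s : w₁ ∈ c.support := by
    by_contra hns
    have h1 : s₁ = w₂ := hs₁w.resolve_left (fun h => hns (h ▸ hs₁supp))
    have h2 : s₂ = w₂ := hs₂w.resolve_left (fun h => hns (h ▸ hs₂supp))
    have h3 : t₃ = w₂ := ht₃w.resolve_left (fun h => hns (h ▸ ht₃supp))
    exact three_edges hc (h1 ▸ he₁c) (h2 ▸ he₂c) (h3 ▸ he₃c') h12
      (h13 (by rw [h1, h3])) h23
  have hw2s : w₂ ∈ c.support := by
    by_contra hns
    have h1 : s₁ = w₁ := hs₁w.resolve_right (fun h => hns (h ▸ hs₁supp))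
    have h2 : s₂ = w₁ := hs₂w.resolve_right (fun h => hns (h ▸ hs₂supp))
    have h3 : t₃ = w₁ := ht₃w.resolve_right (fun h => hns (h ▸ ht₃supp))
    exact three_edges hc (h1 ▸ he₁c) (h2 ▸ he₂c) (h3 ▸ he₃c') h12
      (h13 (by rw [h1, h3])) h23
  -- the chord w₁w₂ is an edge of the cycle
  have hg : s(w₁, w₂) ∈ c.edges := hcl _ _ hw hw1s hw2s
  have hg' : s(w₂, w₁) ∈ c.edges := by rw [Sym2.eq_swap]; exact hg
  have hww : w₁ ≠ w₂ := hw.ne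
  rcases hs₁w with h1 | h1 <;> rcases hs₂w with h2 | h2 <;> rcases ht₃w with h3 | h3
  · exact three_edges hc (h1 ▸ he₁c) (h2 ▸ he₂c) (h3 ▸ he₃c') h12
      (h13 (by rw [h1, h3])) h23
  · exact three_edges hc (h1 ▸ he₁c) (h2 ▸ he₂c) hg h12 ht₁w₂ ht₂w₂
  · exact three_edges hc (h1 ▸ he₁c) (h3 ▸ he₃c') hg (h13 (by rw [h1, h3])) ht₁w₂ hs₃w₂
  · exact three_edges hc (h2 ▸ he₂c) (h3 ▸ he₃c') hg' h23 ht₂w₁ hs₃w₁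
  · exact three_edges hc (h2 ▸ he₂c) (h3 ▸ he₃c') hg h23 ht₂w₂ hs₃w₂
  · exact three_edges hc (h1 ▸ he₁c) (h3 ▸ he₃c') hg' (h13 (by rw [h1, h3])) ht₁w₁ hs₃w₁
  · exact three_edges hc (h1 ▸ he₁c) (h2 ▸ he₂c) hg' h12 ht₁w₁ ht₂w₁
  · exact three_edges hc (h1 ▸ he₁c) (h2 ▸ he₂c) (h3 ▸ he₃c') h12
      (h13 (by rw [h1, h3])) h23

/-- Lift a walk whose support lies in `A` to the induced subgraph on `A`. -/
lemma exists_induced_walk {A : Set V} :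
    ∀ {u v : V} (p : G.Walk u v) (hu : u ∈ A) (hv : v ∈ A)
      (hp : ∀ w ∈ p.support, w ∈ A),
      ∃ q : (G.induce A).Walk ⟨u, hu⟩ ⟨v, hv⟩,
        q.map (SimpleGraph.Embedding.induce A).toHom = p := by
  intro u v p
  induction p with
  | nil =>
    intro hu hv hp
    exact ⟨Walk.nil, rfl⟩
  | cons h q ih =>
    rename_i u' b w'
    intro hu hv hp
    have hb : b ∈ A := hp b (by simp)
    obtain ⟨q', hq'⟩ := ih hb hv (fun w hw => hp w (by simp [hw]))
    refine ⟨Walk.cons (by simpa using h) q', ?_⟩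
    simp [hq']

/-- Transfer a chordless cycle into an induced subgraph containing its support. -/
lemma transfer_to_induce {A : Set V} {x : V} (c : G.Walk x x) (hc : c.IsCycle)
    (hcl : G.IsChordless c) (hsup : ∀ w ∈ c.support, w ∈ A) (hx : x ∈ A) :
    ∃ q : (G.induce A).Walk ⟨x, hx⟩ ⟨x, hx⟩,
      q.IsCycle ∧ (G.induce A).IsChordless q ∧ q.length = c.length := by
  obtain ⟨q, hq⟩ := exists_induced_walk c hx hx hsup
  set f := (SimpleGraph.Embedding.induce (G := G) A).toHom with hf
  have hinj : Function.Injective f := (SimpleGraph.Embedding.induce (G := G) A).injective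
  have hcyc : q.IsCycle := by
    rw [← Walk.map_isCycle_iff_of_injective hinj, hq]
    exact hc
  have hlen : q.length = c.length := by cases hq; exact (Walk.length_map _ _).symm
  have hsupmem : ∀ a : A, a ∈ q.support → (a : V) ∈ c.support := by
    intro a ha
    have h' : (a : V) ∈ (q.map f).support := by
      rw [Walk.support_map]
      exact List.mem_map.2 ⟨a, ha, rfl⟩
    cases hq; exact h'
  refine ⟨q, hcyc, ?_, hlen⟩
  intro a b hab ha hb
  have hadj : G.Adj (a : V) (b : V) := hab
  have hedge : s((a : V), (b : V)) ∈ c.edges :=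
    hcl _ _ hadj (hsupmem a ha) (hsupmem b hb)
  replace hedge : s((a : V), (b : V)) ∈ (q.map f).edges := by cases hq; exact hedge
  rw [Walk.edges_map] at hedge
  obtain ⟨e, he, heq⟩ := List.mem_map.1 hedge
  have : Sym2.map f s(a, b) = s((a : V), (b : V)) := rfl
  have := Sym2.map.injective hinj (heq.trans this.symm)
  rwa [this] at he


variable {r k : ℕ}

lemma theta_adj_hub0 (hk : 3 ≤ k) (z : Fin 2 ⊕ Fin r × Fin (k-1)) :
    (thetaGraph r k).Adj (Sum.inl 0) z ↔ ∃ i : Fin r, z = Sum.inr (i, ⟨0, by omega⟩) := by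
  unfold thetaGraph
  rw [SimpleGraph.fromRel_adj]
  rcases z with a | ⟨i, j⟩
  · simp
  · simp [Fin.ext_iff]

lemma theta_adj_hub1 (hk : 3 ≤ k) (z : Fin 2 ⊕ Fin r × Fin (k-1)) :
    (thetaGraph r k).Adj (Sum.inl 1) z ↔ ∃ i : Fin r, z = Sum.inr (i, ⟨k-2, by omega⟩) := by
  unfold thetaGraph
  rw [SimpleGraph.fromRel_adj]
  rcases z with a | ⟨i, j⟩
  · simp
  · simp [Fin.ext_iff]
    omega

/-- Left neighbor of an internal theta-graph vertex. -/
def nbrL (i : Fin r) (j : Fin (k-1)) : Fin 2 ⊕ Fin r × Fin (k-1) :=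
  if h : (j : ℕ) = 0 then Sum.inl 0
  else Sum.inr (i, ⟨(j : ℕ) - 1, by have := j.isLt; omega⟩)

/-- Right neighbor of an internal theta-graph vertex. -/
def nbrR (i : Fin r) (j : Fin (k-1)) : Fin 2 ⊕ Fin r × Fin (k-1) :=
  if h : (j : ℕ) = k - 2 then Sum.inl 1
  else Sum.inr (i, ⟨(j : ℕ) + 1, by have := j.isLt; omega⟩)

lemma nbrLR_ne (hk : 3 ≤ k) (i : Fin r) (j : Fin (k-1)) : nbrL i j ≠ nbrR i j := by
  have hj := j.isLt
  unfold nbrL nbrR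
  split_ifs with h1 h2 h2 <;> simp [Fin.ext_iff] <;> omega

lemma theta_edge_inr {u v : Fin 2 ⊕ Fin r × Fin (k-1)} (h : (thetaGraph r k).Adj u v) :
    (∃ i j, u = Sum.inr (i, j)) ∨ (∃ i j, v = Sum.inr (i, j)) := by
  rcases u with a | ⟨i, j⟩
  · rcases v with b | ⟨i, j⟩
    · exfalso
      rw [thetaGraph, SimpleGraph.fromRel_adj] at h
      simp at h
    · exact Or.inr ⟨i, j, rfl⟩
  · exact Or.inl ⟨i, j, rfl⟩

lemma theta_adj_internal (hk : 3 ≤ k) (i : Fin r) (j : Fin (k-1))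
    (z : Fin 2 ⊕ Fin r × Fin (k-1)) :
    (thetaGraph r k).Adj (Sum.inr (i, j)) z ↔ z = nbrL i j ∨ z = nbrR i j := by
  have hj := j.isLt
  unfold thetaGraph
  rw [SimpleGraph.fromRel_adj]
  rcases z with a | ⟨i', j'⟩
  · have ha := a.isLt
    unfold nbrL nbrR
    split_ifs with h1 h2 h2 <;>
      simp [Fin.ext_iff, Prod.ext_iff, -Fin.val_eq_zero_iff] <;> omega
  · have hj' := j'.isLt
    unfold nbrL nbrR
    split_ifs with h1 h2 h2 <;>
      simp [Fin.ext_iff, Prod.ext_iff] <;> omega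

theorem theta_cycle_length (hk : 3 ≤ k) {x : Fin 2 ⊕ Fin r × Fin (k-1)}
    (c : (thetaGraph r k).Walk x x) (hc : c.IsCycle) : c.length = 2 * k := by
  classical
  have hnn : ¬ c.Nil := hc.not_nil
  have hadj : ∀ {s t}, s(s, t) ∈ c.edges → (thetaGraph r k).Adj s t :=
    fun h => c.adj_of_mem_edges h
  have hsuppe : ∀ {s t}, s(s, t) ∈ c.edges → t ∈ c.support :=
    fun h => Walk.snd_mem_support_of_mem_edges c h
  have h0lt : 0 < k - 1 := by omega
  -- every internal vertex on the cycle has both of its neighbors on the cycle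
  have hstep : ∀ (i : Fin r) (j : Fin (k-1)), Sum.inr (i, j) ∈ c.support →
      s(Sum.inr (i, j), nbrL i j) ∈ c.edges ∧ s(Sum.inr (i, j), nbrR i j) ∈ c.edges := by
    intro i j hv
    obtain ⟨t₁, t₂, hne, hiff⟩ := cycle_two_nbrs c hc hv
    have h₁ : t₁ = nbrL i j ∨ t₁ = nbrR i j :=
      (theta_adj_internal hk i j t₁).1 (hadj ((hiff t₁).2 (Or.inl rfl)))
    have h₂ : t₂ = nbrL i j ∨ t₂ = nbrR i j :=
      (theta_adj_internal hk i j t₂).1 (hadj ((hiff t₂).2 (Or.inr rfl)))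
    rcases h₁ with rfl | rfl <;> rcases h₂ with rfl | rfl
    · exact absurd rfl hne
    · exact ⟨(hiff _).2 (Or.inl rfl), (hiff _).2 (Or.inr rfl)⟩
    · exact ⟨(hiff _).2 (Or.inr rfl), (hiff _).2 (Or.inl rfl)⟩
    · exact absurd rfl hne
  -- propagation upwards along a path
  have hup : ∀ (i : Fin r) (d : ℕ) (j : Fin (k-1)), Sum.inr (i, j) ∈ c.support →
      ∀ (hd : (j : ℕ) + d < k - 1), Sum.inr (i, ⟨(j : ℕ) + d, hd⟩) ∈ c.support := by
    intro i d
    induction d with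
    | zero =>
      intro j hj hd
      simpa using hj
    | succ d ih =>
      intro j hj hd
      have hjk : (j : ℕ) ≠ k - 2 := by omega
      have hR : nbrR i j = Sum.inr (i, ⟨(j : ℕ) + 1, by have := j.isLt; omega⟩) := by
        unfold nbrR; rw [dif_neg hjk]
      have h1 : Sum.inr (i, (⟨(j : ℕ) + 1, by have := j.isLt; omega⟩ : Fin (k-1))) ∈ c.support := by
        have := (hstep i j hj).2
        rw [hR] at this
        exact hsuppe this
      have h2 := ih _ h1 (by simp only [Fin.val_mk]; omega)
      have heq : (⟨((⟨(j : ℕ) + 1, by have := j.isLt; omega⟩ : Fin (k-1)) : ℕ) + d, by simp only [Fin.val_mk]; omega⟩ : Fin (k-1))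
          = ⟨(j : ℕ) + (d + 1), hd⟩ := Fin.ext (by simp only [Fin.val_mk]; omega)
      rwa [heq] at h2
  -- propagation downwards along a path
  have hdown : ∀ (i : Fin r) (d : ℕ) (j : Fin (k-1)), Sum.inr (i, j) ∈ c.support →
      d ≤ (j : ℕ) → Sum.inr (i, (⟨(j : ℕ) - d, by have := j.isLt; omega⟩ : Fin (k-1))) ∈ c.support := by
    intro i d
    induction d with
    | zero =>
      intro j hj hd
      simpa using hj
    | succ d ih =>
      intro j hj hd
      have hj0 : (j : ℕ) ≠ 0 := by omega
      have hL : nbrL i j = Sum.inr (i, ⟨(j : ℕ) - 1, by have := j.isLt; omega⟩) := by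
        unfold nbrL; rw [dif_neg hj0]
      have h1 : Sum.inr (i, (⟨(j : ℕ) - 1, by have := j.isLt; omega⟩ : Fin (k-1))) ∈ c.support := by
        have := (hstep i j hj).1
        rw [hL] at this
        exact hsuppe this
      have h2 := ih _ h1 (by simp; omega)
      have heq : (⟨((⟨(j : ℕ) - 1, by have := j.isLt; omega⟩ : Fin (k-1)) : ℕ) - d, by have := j.isLt; omega⟩ : Fin (k-1))
          = ⟨(j : ℕ) - (d + 1), by have := j.isLt; omega⟩ := Fin.ext (by simp; omega)
      rwa [heq] at h2
  -- whole path lies on the cycle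
  have hall : ∀ (i : Fin r) (j₀ j : Fin (k-1)), Sum.inr (i, j₀) ∈ c.support →
      Sum.inr (i, j) ∈ c.support := by
    intro i j₀ j h
    rcases le_or_gt (j₀ : ℕ) (j : ℕ) with hle | hlt
    · have := hup i ((j : ℕ) - (j₀ : ℕ)) j₀ h (by have := j.isLt; omega)
      have heq : (⟨(j₀ : ℕ) + ((j : ℕ) - (j₀ : ℕ)), by have := j.isLt; omega⟩ : Fin (k-1)) = j :=
        Fin.ext (by simp; omega)
      rwa [heq] at this
    · have := hdown i ((j₀ : ℕ) - (j : ℕ)) j₀ h (by omega)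
      have heq : (⟨(j₀ : ℕ) - ((j₀ : ℕ) - (j : ℕ)), by have := j₀.isLt; omega⟩ : Fin (k-1)) = j :=
        Fin.ext (by simp; omega)
      rwa [heq] at this
  -- edges from the endpoints of paths to the hubs
  have hedge0 : ∀ i : Fin r, Sum.inr (i, (⟨0, h0lt⟩ : Fin (k-1))) ∈ c.support →
      s(Sum.inl 0, Sum.inr (i, (⟨0, h0lt⟩ : Fin (k-1)))) ∈ c.edges := by
    intro i h
    have := (hstep i ⟨0, h0lt⟩ h).1
    have hL : nbrL i (⟨0, h0lt⟩ : Fin (k-1)) = Sum.inl 0 := by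
      unfold nbrL; rw [dif_pos rfl]
    rw [hL] at this
    rwa [Sym2.eq_swap] at this
  have hk2lt : k - 2 < k - 1 := by omega
  have hedge1 : ∀ i : Fin r, Sum.inr (i, (⟨k-2, hk2lt⟩ : Fin (k-1))) ∈ c.support →
      s(Sum.inl 1, Sum.inr (i, (⟨k-2, hk2lt⟩ : Fin (k-1)))) ∈ c.edges := by
    intro i h
    have := (hstep i ⟨k-2, hk2lt⟩ h).2
    have hR : nbrR i (⟨k-2, hk2lt⟩ : Fin (k-1)) = Sum.inl 1 := by
      unfold nbrR; rw [dif_pos rfl]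
    rw [hR] at this
    rwa [Sym2.eq_swap] at this
  -- some internal vertex lies on the cycle
  obtain ⟨i₀, j₀, h₀⟩ : ∃ (i : Fin r) (j : Fin (k-1)), Sum.inr (i, j) ∈ c.support := by
    obtain ⟨t₁, t₂, hne, hiff⟩ := cycle_two_nbrs c hc c.start_mem_support
    have he : s(x, t₁) ∈ c.edges := (hiff t₁).2 (Or.inl rfl)
    have ht₁ : t₁ ∈ c.support := hsuppe he
    rcases theta_edge_inr (hadj he) with ⟨i, j, hij⟩ | ⟨i, j, hij⟩
    · exact ⟨i, j, by rw [← hij]; exact c.start_mem_support⟩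
    · exact ⟨i, j, by rw [← hij]; exact ht₁⟩
  -- the hubs lie on the cycle
  have hh0 : Sum.inl 0 ∈ c.support :=
    Walk.fst_mem_support_of_mem_edges c (hedge0 i₀ (hall i₀ j₀ _ h₀))
  have hh1 : Sum.inl 1 ∈ c.support :=
    Walk.fst_mem_support_of_mem_edges c (hedge1 i₀ (hall i₀ j₀ _ h₀))
  -- analysis at hub 0 : exactly two paths meet the cycle
  obtain ⟨t₁, t₂, hne, hiff⟩ := cycle_two_nbrs c hc hh0
  obtain ⟨i₁, hi₁⟩ := (theta_adj_hub0 hk t₁).1 (hadj ((hiff t₁).2 (Or.inl rfl)))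
  obtain ⟨i₂, hi₂⟩ := (theta_adj_hub0 hk t₂).1 (hadj ((hiff t₂).2 (Or.inr rfl)))
  have hi12 : i₁ ≠ i₂ := by
    rintro rfl
    exact hne (hi₁.trans hi₂.symm)
  have hpath1 : ∀ j : Fin (k-1), Sum.inr (i₁, j) ∈ c.support :=
    fun j => hall i₁ _ j (hi₁ ▸ hsuppe ((hiff t₁).2 (Or.inl rfl)))
  have hpath2 : ∀ j : Fin (k-1), Sum.inr (i₂, j) ∈ c.support :=
    fun j => hall i₂ _ j (hi₂ ▸ hsuppe ((hiff t₂).2 (Or.inr rfl)))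
  -- the vertex set of the cycle
  set SF : Finset (Fin 2 ⊕ Fin r × Fin (k-1)) :=
    ({Sum.inl 0, Sum.inl 1} : Finset _) ∪
      Finset.univ.image (fun j : Fin (k-1) => Sum.inr (i₁, j)) ∪
      Finset.univ.image (fun j : Fin (k-1) => Sum.inr (i₂, j)) with hSF
  have hsub : ∀ v ∈ c.support, v ∈ SF := by
    intro v hv
    rcases v with a | ⟨i, j⟩
    · fin_cases a <;> simp [hSF]
    · by_cases h1 : i = i₁
      · subst h1
        simp [hSF]
      by_cases h2 : i = i₂
      · subst h2
        simp [hSF]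
      exfalso
      have h0' : Sum.inr (i, (⟨0, h0lt⟩ : Fin (k-1))) ∈ c.support := hall i j _ hv
      have := (hiff _).1 (hedge0 i h0')
      rcases this with h | h
      · rw [hi₁] at h
        simp only [Sum.inr.injEq, Prod.mk.injEq] at h
        exact h1 h.1
      · rw [hi₂] at h
        simp only [Sum.inr.injEq, Prod.mk.injEq] at h
        exact h2 h.1
  have hsup : ∀ v ∈ SF, v ∈ c.support := by
    intro v hv
    simp only [hSF, Finset.mem_union, Finset.mem_insert, Finset.mem_singleton,
      Finset.mem_image, Finset.mem_univ, true_and] at hv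
    rcases hv with ((rfl | rfl) | ⟨j, rfl⟩) | ⟨j, rfl⟩
    · exact hh0
    · exact hh1
    · exact hpath1 j
    · exact hpath2 j
  -- cardinality computation
  have hcard : SF.card = 2 * k := by
    rw [hSF]
    rw [Finset.card_union_of_disjoint, Finset.card_union_of_disjoint]
    · rw [Finset.card_image_of_injective _ (fun a b h => by simpa using h),
        Finset.card_image_of_injective _ (fun a b h => by simpa using h)]
      simp only [Finset.card_univ, Fintype.card_fin]
      rw [Finset.card_insert_of_notMem (by simp), Finset.card_singleton]
      omega
    · simp
    · simp only [Finset.disjoint_union_left]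
      constructor
      · simp [Finset.disjoint_left]
      · rw [Finset.disjoint_left]
        rintro v hv hv'
        simp only [Finset.mem_image, Finset.mem_univ, true_and] at hv hv'
        obtain ⟨j, rfl⟩ := hv
        obtain ⟨j', hj'⟩ := hv'
        simp only [Sum.inr.injEq, Prod.mk.injEq] at hj'
        exact hi12 hj'.1.symm
  -- conclude
  have htn : c.support.tail.Nodup := hc.support_nodup
  have hset : c.support.tail.toFinset = SF := by
    ext v
    rw [List.mem_toFinset, mem_support_tail_iff c hnn]
    exact ⟨hsub v, hsup v⟩
  have := List.toFinset_card_of_nodup htn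
  rw [hset, hcard] at this
  have hls : c.support.length = c.length + 1 := Walk.length_support c
  rw [List.length_tail, hls] at this
  omega

/-- `IsThetaSum k V G` : the graph `G` is an iterated 2-clique sum of theta graphs
`Θ_r^k` with `r ≥ 2`. -/
inductive IsThetaSum (k : ℕ) : (V : Type) → SimpleGraph V → Prop
  | base (V : Type) (G : SimpleGraph V) (r : ℕ) (hr : 2 ≤ r)
      (iso : G ≃g thetaGraph r k) : IsThetaSum k V G
  | sum (V : Type) (G : SimpleGraph V) (A B : Set V) (w₁ w₂ : V) (hne : w₁ ≠ w₂)
      (hcover : A ∪ B = Set.univ) (hinter : A ∩ B = {w₁, w₂}) (hw : G.Adj w₁ w₂)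
      (hsplit : ∀ a b : V, G.Adj a b → (a ∈ A ∧ b ∈ A) ∨ (a ∈ B ∧ b ∈ B))
      (hA : IsThetaSum k A (G.induce A)) (r : ℕ) (hr : 2 ≤ r)
      (hB : (G.induce B) ≃g thetaGraph r k) : IsThetaSum k V G

/-- If `k ≥ 3` and `G` is an iterated 2-clique sum of theta graphs `Θ_r^k`, then every
chordless cycle of `G` has length `2k`. -/
theorem stmt17 (k : ℕ) (hk : 3 ≤ k) (V : Type) (G : SimpleGraph V)
    (hG : IsThetaSum k V G) (x : V) (c : G.Walk x x) (hc : c.IsCycle)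
    (hcl : G.IsChordless c) :
    c.length = 2 * k := by
  induction hG with
  | base V G r hr iso =>
    have hinj : Function.Injective iso.toHom := iso.toEquiv.injective
    have hd : (c.map iso.toHom).IsCycle :=
      (Walk.map_isCycle_iff_of_injective hinj).2 hc
    have := theta_cycle_length hk (c.map iso.toHom) hd
    rwa [Walk.length_map] at this
  | sum V G A B w₁ w₂ hne hcover hinter hw hsplit hA r hr hB ih =>
    rcases cycle_in_side hcover hinter hw hsplit c hc hcl with hin | hin
    · have hx : x ∈ A := hin x c.start_mem_support
      obtain ⟨q, hqc, hqcl, hqlen⟩ := transfer_to_induce c hc hcl hin hx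
      rw [← hqlen]
      exact ih _ q hqc hqcl
    · have hx : x ∈ B := hin x c.start_mem_support
      obtain ⟨q, hqc, hqcl, hqlen⟩ := transfer_to_induce c hc hcl hin hx
      have hinj : Function.Injective hB.toHom := hB.toEquiv.injective
      have hd : (q.map hB.toHom).IsCycle :=
        (Walk.map_isCycle_iff_of_injective hinj).2 hqc
      have := theta_cycle_length hk (q.map hB.toHom) hd
      rw [Walk.length_map, hqlen] at this
      exact this
end

section
/- Let w = (z₀, z₁, …, z_{2ℓ} = z₀) be an even closed walk in a graph G and let w′ be another even closed walk such that the binomials B_w = x^λ − x^μ and B_{w′} = x^α − x^μ satisfy gcd(x^λ, x^α) = 1, where x^λ collects the odd-indexed edges of w. Then for every even index i ∈ {0, …, 2ℓ−1}, the edge {z_i, z_{i+1}} of w does not belong to w′. -/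
/-- `altSplit l = (λ, μ)` where `λ` is the multiset of elements of `l` in odd positions
(1st, 3rd, …, i.e. indices 0, 2, …) and `μ` the multiset of elements in even positions. -/
def altSplit {X : Type*} : List X → Multiset X × Multiset X
  | [] => (0, 0)
  | e :: l => ((altSplit l).2 + {e}, (altSplit l).1)

lemma altSplit_get {X : Type*} : ∀ (l : List X) (i : ℕ) (hi : i < l.length),
    (Even i → l.get ⟨i, hi⟩ ∈ (altSplit l).1) ∧ (¬ Even i → l.get ⟨i, hi⟩ ∈ (altSplit l).2)
  | [], i, hi => by simp at hi
  | e :: l, 0, hi => by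
      simp [altSplit]
  | e :: l, i + 1, hi => by
      have h := altSplit_get l i (Nat.lt_of_succ_lt_succ hi)
      constructor
      · intro hev
        have : ¬ Even i := by simp [Nat.even_add_one] at hev; simpa using hev
        simpa [altSplit] using Or.inl (h.2 this)
      · intro hod
        have : Even i := by simpa [Nat.even_add_one] using hod
        simpa [altSplit] using h.1 this

lemma altSplit_mem {X : Type*} : ∀ (l : List X) (a : X), a ∈ l →
    a ∈ (altSplit l).1 ∨ a ∈ (altSplit l).2
  | e :: l, a, h => by
      rcases List.mem_cons.1 h with rfl | h
      · left; simp [altSplit]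
      · rcases altSplit_mem l a h with h1 | h2
        · right; simpa [altSplit] using h1
        · left; simp [altSplit]; exact Or.inl h2

/-- Let `w` be an even closed walk of length `2ℓ` with `B_w = x^λ − x^μ` (with
`gcd(x^λ, x^μ) = 1`, `x^λ` collecting the odd-position edges of `w`), and let `w′` be an
even closed walk with `B_{w′} = x^α − x^μ` (sharing the trailing term `x^μ`) such that
`gcd(x^λ, x^α) = 1`. Then, for every even index `i`, the edge `{z_i, z_{i+1}}` of `w`
does not belong to `w′`. -/
theorem stmt18 {V : Type*} (G : SimpleGraph V) (u u' : V) (ℓ : ℕ)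
    (w : G.Walk u u) (w' : G.Walk u' u') (hlen : w.length = 2 * ℓ)
    (hred : Disjoint (altSplit w.edges).1 (altSplit w.edges).2)
    (hcoprime : Disjoint (altSplit w.edges).1 (altSplit w'.edges).1)
    (hmu : (altSplit w.edges).2 = (altSplit w'.edges).2) :
    ∀ (i : ℕ) (hi : i < w.edges.length), Even i → w.edges.get ⟨i, hi⟩ ∉ w'.edges := by
  intro i hi hev hmem
  have hlam : w.edges.get ⟨i, hi⟩ ∈ (altSplit w.edges).1 :=
    (altSplit_get w.edges i hi).1 hev
  rcases altSplit_mem w'.edges _ hmem with h1 | h2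
  · exact (Multiset.disjoint_left.1 hcoprime) hlam h1
  · exact (Multiset.disjoint_left.1 hred) hlam (hmu ▸ h2)
end

section
/- Let H and K be graphs on disjoint vertex sets except for two shared vertices w₁, w₂ forming a shared edge, and let G be their 2-clique sum along that edge. If every chordless cycle of H has length g and every chordless cycle of K has length g, then every chordless cycle of G has length g. -/
namespace CliqueSumAux

open SimpleGraph Walk

variable {V : Type*} {G : SimpleGraph V}

/-- Lift a walk whose support lies in `A` to the induced graph on `A`. -/
def liftInduce {A : Set V} : ∀ {u v : V} (p : G.Walk u v) (h : ∀ x ∈ p.support, x ∈ A),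
    (G.induce A).Walk ⟨u, h u p.start_mem_support⟩ ⟨v, h v p.end_mem_support⟩
  | _, _, Walk.nil, _ => Walk.nil
  | _, _, Walk.cons adj p, h =>
      Walk.cons (by exact adj) (liftInduce p (fun x hx => h x (by simp [hx])))

lemma liftInduce_map {A : Set V} : ∀ {u v : V} (p : G.Walk u v) (h : ∀ x ∈ p.support, x ∈ A),
    (liftInduce p h).map (Embedding.induce (G := G) A).toHom = p
  | _, _, Walk.nil, _ => rfl
  | _, _, Walk.cons adj p, h => by
      exact congrArg (Walk.cons adj) (liftInduce_map p (fun x hx => h x (by simp [hx])))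

lemma inside_case {A : Set V} {g : ℕ}
    (hA : ∀ (x : ↥A) (c : (G.induce A).Walk x x), c.IsCycle →
      (G.induce A).IsChordless c → c.length = g)
    {x : V} (c : G.Walk x x) (hc : c.IsCycle) (hcl : G.IsChordless c)
    (hsupp : ∀ v ∈ c.support, v ∈ A) : c.length = g := by
  set q := liftInduce c hsupp with hq
  have hmap := liftInduce_map c hsupp
  have hinj : Function.Injective (Embedding.induce (G := G) A).toHom := Subtype.val_injective
  have hqcyc : q.IsCycle := by
    rw [← Walk.map_isCycle_iff_of_injective hinj, hmap]; exact hc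
  have hsup : q.support.map (Embedding.induce (G := G) A).toHom = c.support := by
    rw [← Walk.support_map]; exact congrArg Walk.support hmap
  have hedg : q.edges.map (Sym2.map (Embedding.induce (G := G) A).toHom) = c.edges := by
    rw [← Walk.edges_map]; exact congrArg Walk.edges hmap
  have hqcl : (G.induce A).IsChordless q := by
    intro a b hab ha hb
    have hab' : G.Adj a.1 b.1 := hab
    have ha' : (a : V) ∈ c.support := by
      rw [← hsup]; exact List.mem_map_of_mem ha
    have hb' : (b : V) ∈ c.support := by
      rw [← hsup]; exact List.mem_map_of_mem hb
    have := hcl a.1 b.1 hab' ha' hb'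
    rw [← hedg] at this
    obtain ⟨e, he, heq⟩ := List.mem_map.mp this
    have : e = s(a, b) := by
      apply Sym2.map.injective hinj
      rw [heq]; rfl
    rwa [this] at he
  have hlen : q.length = c.length := by
    rw [← Walk.length_map (f := (Embedding.induce (G := G) A).toHom)]
    exact congrArg Walk.length hmap
  rw [← hlen]
  exact hA _ q hqcyc hqcl

variable [DecidableEq V]

lemma cross {S T : Set V} (hs : ∀ a b, G.Adj a b → a ∈ S → a ∉ T → b ∈ S) :
    ∀ {u v : V} (p : G.Walk u v), u ∈ S → v ∉ S →
      ∃ w, w ∈ p.support ∧ w ∈ S ∧ w ∈ T := by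
  intro u v p
  induction p with
  | nil => intro hu hv; exact absurd hu hv
  | @cons a b _ adj q ih =>
    intro hu hv
    by_cases hT : a ∈ T
    · exact ⟨a, by simp, hu, hT⟩
    · obtain ⟨w, hw, h1, h2⟩ := ih (hs _ _ adj hu hT) hv
      exact ⟨w, by simp [hw], h1, h2⟩

lemma mem_rotate_support {u x v : V} {c : G.Walk u u} (h : x ∈ c.support) :
    v ∈ (c.rotate _ h).support ↔ v ∈ c.support := by
  rw [Walk.rotate.eq_def, mem_support_append_iff, or_comm, ← mem_support_append_iff, take_spec]

lemma noMix {A B : Set V} {w₁ w₂ : V}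
    (hinter : A ∩ B = {w₁, w₂}) (hcover : A ∪ B = Set.univ)
    (hsA : ∀ a b, G.Adj a b → a ∈ A → a ∉ B → b ∈ A)
    (hsB : ∀ a b, G.Adj a b → a ∈ B → a ∉ A → b ∈ B)
    (hw1A : w₁ ∈ A) (hw1B : w₁ ∈ B) (hw2A : w₂ ∈ A) (hw2B : w₂ ∈ B)
    (r : G.Walk w₂ w₁) (hr : r.IsPath)
    (m : V) (hm : m ∈ r.support) (hmA : m ∉ A)
    (n : V) (hn : n ∈ r.support) (hnB : n ∉ B) : False := by
  have hmB : m ∈ B := by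
    have h : m ∈ A ∪ B := hcover.symm ▸ Set.mem_univ m
    exact ((Set.mem_union _ _ _).mp h).resolve_left hmA
  have hnA : n ∈ A := by
    have h : n ∈ A ∪ B := hcover.symm ▸ Set.mem_univ n
    exact ((Set.mem_union _ _ _).mp h).resolve_right hnB
  set s := r.takeUntil n hn with hs
  set t := r.dropUntil n hn with ht
  have hst : s.append t = r := take_spec r hn
  have hrs : r.support = s.support ++ t.support.tail := by
    rw [← hst, support_append]
  have hsP : s.IsPath := hr.takeUntil hn
  have htP : t.IsPath := hr.dropUntil hn
  have hdisj : List.Disjoint s.support t.support.tail :=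
    List.disjoint_of_nodup_append (by rw [← hrs]; exact hr.support_nodup)
  have hmst : m ∈ s.support ∨ m ∈ t.support := by
    rw [← hst, mem_support_append_iff] at hm; exact hm
  rcases hmst with hms | hmt
  · set sub := s.dropUntil m hms with hsub
    obtain ⟨w, hwsub, hwB, hwA⟩ := cross hsB sub hmB hnB
    have hwint : w ∈ ({w₁, w₂} : Set V) := by rw [← hinter]; exact ⟨hwA, hwB⟩
    have hwsS : w ∈ s.support := (support_dropUntil_subset s hms) hwsub
    rcases hwint with hw1 | hw2
    · subst hw1
      have h1 : w ∈ t.support.tail :=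
        end_mem_tail_support_of_ne (fun h : n = w => hnB (by rw [h]; exact hw1B)) t
      exact hdisj hwsS h1
    · subst hw2
      have hsplit2 : (s.takeUntil m hms).append sub = s := take_spec s hms
      have hnod : ((s.takeUntil m hms).support ++ sub.support.tail).Nodup := by
        rw [← support_append, hsplit2]; exact hsP.support_nodup
      have hd2 := List.disjoint_of_nodup_append hnod
      have hwtake : w ∈ (s.takeUntil m hms).support := by
        have := start_mem_support (s.takeUntil m hms); exact this
      have hwtail : w ∈ sub.support.tail := by
        rw [support_eq_cons sub] at hwsub
        rcases List.mem_cons.mp hwsub with h | h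
        · exact absurd (h ▸ hw2A) hmA
        · exact h
      exact hd2 hwtake hwtail
  · set sub := t.takeUntil m hmt with hsub
    obtain ⟨w, hwsub, hwA, hwB⟩ := cross hsA sub hnA hmA
    have hwint : w ∈ ({w₁, w₂} : Set V) := by rw [← hinter]; exact ⟨hwA, hwB⟩
    have hwtS : w ∈ t.support := (support_takeUntil_subset t hmt) hwsub
    rcases hwint with hw1 | hw2
    · subst hw1
      have hsplit2 : sub.append (t.dropUntil m hmt) = t := take_spec t hmt
      have hnod : (sub.support ++ (t.dropUntil m hmt).support.tail).Nodup := by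
        rw [← support_append, hsplit2]; exact htP.support_nodup
      have hd2 := List.disjoint_of_nodup_append hnod
      have h1 : w ∈ (t.dropUntil m hmt).support.tail :=
        end_mem_tail_support_of_ne (fun h : m = w => hmA (by rw [h]; exact hw1A)) _
      exact hd2 hwsub h1
    · subst hw2
      have hwtail : w ∈ t.support.tail := by
        rw [support_eq_cons t] at hwtS
        rcases List.mem_cons.mp hwtS with h | h
        · exact absurd (h ▸ hw2B) hnB
        · exact h
      exact hdisj s.start_mem_support hwtail

lemma pathEdgeEnd :
    ∀ {y z : V} (q : G.Walk y z), q.IsPath → ∀ {w₂ : V}, z ≠ w₂ →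
      s(z, w₂) ∈ q.edges →
      ∃ q₂ : G.Walk y w₂, q₂.IsPath ∧ z ∉ q₂.support ∧
        (∀ v ∈ q.support, v = z ∨ v ∈ q₂.support) ∧
        (∀ v ∈ q₂.support, v ∈ q.support) := by
  intro y z q
  induction q with
  | nil => intro _ _ _ he; simp at he
  | @cons y b z adj q' ih =>
    intro hp w₂ hne he
    rw [Walk.cons_isPath_iff] at hp
    obtain ⟨hp', hy⟩ := hp
    rw [edges_cons, List.mem_cons] at he
    rcases he with he | he
    · rw [Sym2.eq_iff] at he
      rcases he with ⟨h1, h2⟩ | ⟨h1, h2⟩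
      · exact absurd (h1 ▸ q'.end_mem_support) hy
      · subst h2
        subst h1
        have hq'nil : q' = Walk.nil :=
          congrArg Subtype.val (SimpleGraph.Path.loop_eq ⟨q', hp'⟩)
        refine ⟨Walk.nil, by simp, by simpa using hne, ?_, by simp⟩
        intro v hv
        rw [support_cons, List.mem_cons, hq'nil] at hv
        rcases hv with hv | hv
        · right; simp [hv]
        · left; simpa using hv
    · obtain ⟨q₂', hP, hw1, hsub1, hsub2⟩ := ih hp' hne he
      have hyz : y ∉ q₂'.support := fun h => hy (hsub2 _ h)
      refine ⟨Walk.cons adj q₂', (Walk.cons_isPath_iff _ _).mpr ⟨hP, hyz⟩, ?_, ?_, ?_⟩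
      · rw [support_cons, List.mem_cons]
        rintro (h | h)
        · exact hy (h ▸ q'.end_mem_support)
        · exact hw1 h
      · intro v hv
        rw [support_cons, List.mem_cons] at hv
        rcases hv with hv | hv
        · right; simp [hv]
        · rcases hsub1 v hv with h | h
          · exact Or.inl h
          · right; simp [h]
      · intro v hv
        rw [support_cons, List.mem_cons] at hv
        rcases hv with hv | hv
        · simp [hv]
        · simp [hsub2 v hv]

lemma cycleDecomp {w₁ w₂ : V} (hne : w₁ ≠ w₂) (c : G.Walk w₁ w₁) (hc : c.IsCycle)
    (he : s(w₁, w₂) ∈ c.edges) :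
    ∃ r : G.Walk w₂ w₁, r.IsPath ∧ ∀ v ∈ c.support, v = w₁ ∨ v ∈ r.support := by
  cases c with
  | nil => simp at he
  | @cons _ y _ adj q =>
    have hq : q.IsPath := ((Walk.cons_isCycle_iff q adj).mp hc).1
    rw [edges_cons, List.mem_cons] at he
    rcases he with he | he
    · rw [Sym2.eq_iff] at he
      rcases he with ⟨_, h2⟩ | ⟨h1, h2⟩
      · subst h2
        exact ⟨q, hq, fun v hv => by
          rw [support_cons, List.mem_cons] at hv
          rcases hv with hv | hv
          · exact Or.inl hv
          · exact Or.inr hv⟩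
      · exact absurd h2.symm hne
    · obtain ⟨q₂, hP, hw1, hsub1, _⟩ := pathEdgeEnd q hq hne he
      refine ⟨(Walk.cons adj q₂).reverse,
        ((Walk.cons_isPath_iff _ _).mpr ⟨hP, hw1⟩).reverse, ?_⟩
      intro v hv
      rw [support_cons, List.mem_cons] at hv
      rw [support_reverse, List.mem_reverse, support_cons, List.mem_cons]
      rcases hv with hv | hv
      · exact Or.inl hv
      · rcases hsub1 v hv with h | h
        · exact Or.inl h
        · exact Or.inr (Or.inr h)

end CliqueSumAux

open CliqueSumAux SimpleGraph Walk in
/-- Let `G` be the 2-clique sum of the graphs induced on `A` and on `B`, glued along the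
shared edge `{w₁, w₂}`. If every chordless cycle of `G.induce A` has length `g` and every
chordless cycle of `G.induce B` has length `g`, then every chordless cycle of `G` has
length `g`. -/
theorem stmt19 {V : Type*} (G : SimpleGraph V) (A B : Set V) (w₁ w₂ : V) (hne : w₁ ≠ w₂)
    (hcover : A ∪ B = Set.univ) (hinter : A ∩ B = {w₁, w₂}) (hw : G.Adj w₁ w₂)
    (hsplit : ∀ a b : V, G.Adj a b → (a ∈ A ∧ b ∈ A) ∨ (a ∈ B ∧ b ∈ B))
    (g : ℕ)
    (hA : ∀ (x : ↥A) (c : (G.induce A).Walk x x), c.IsCycle →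
      (G.induce A).IsChordless c → c.length = g)
    (hB : ∀ (x : ↥B) (c : (G.induce B).Walk x x), c.IsCycle →
      (G.induce B).IsChordless c → c.length = g)
    (x : V) (c : G.Walk x x) (hc : c.IsCycle) (hcl : G.IsChordless c) :
    c.length = g := by
  classical
  have hw1AB : w₁ ∈ A ∩ B := by rw [hinter]; left; rfl
  have hw2AB : w₂ ∈ A ∩ B := by rw [hinter]; right; rfl
  have hw1A : w₁ ∈ A := hw1AB.1
  have hw1B : w₁ ∈ B := hw1AB.2
  have hw2A : w₂ ∈ A := hw2AB.1
  have hw2B : w₂ ∈ B := hw2AB.2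
  have hsA : ∀ a b, G.Adj a b → a ∈ A → a ∉ B → b ∈ A := by
    intro a b hab ha hnb
    rcases hsplit a b hab with ⟨_, h⟩ | ⟨h, _⟩
    · exact h
    · exact absurd h hnb
  have hsB : ∀ a b, G.Adj a b → a ∈ B → a ∉ A → b ∈ B := by
    intro a b hab ha hna
    rcases hsplit a b hab with ⟨h, _⟩ | ⟨_, h⟩
    · exact absurd h hna
    · exact h
  by_cases hAll : ∀ v ∈ c.support, v ∈ A
  · exact inside_case hA c hc hcl hAll
  by_cases hBll : ∀ v ∈ c.support, v ∈ B
  · exact inside_case hB c hc hcl hBll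
  exfalso
  push_neg at hAll hBll
  obtain ⟨m, hm, hmA⟩ := hAll
  obtain ⟨n, hn, hnB⟩ := hBll
  have hmB : m ∈ B := by
    have h : m ∈ A ∪ B := hcover.symm ▸ Set.mem_univ m
    exact ((Set.mem_union _ _ _).mp h).resolve_left hmA
  have hnA : n ∈ A := by
    have h : n ∈ A ∪ B := hcover.symm ▸ Set.mem_univ n
    exact ((Set.mem_union _ _ _).mp h).resolve_right hnB
  -- Step 1: both w₁ and w₂ lie on the cycle.
  have key : w₁ ∈ c.support ∧ w₂ ∈ c.support := by
    set c₁ := c.rotate _ hn with hc₁def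
    have hc₁ : c₁.IsCycle := hc.rotate hn
    have hm₁ : m ∈ c₁.support := (mem_rotate_support hn).mpr hm
    set p := c₁.takeUntil m hm₁ with hp
    set q := c₁.dropUntil m hm₁ with hqdef
    obtain ⟨wp, hwp, hwpA, hwpB⟩ := cross hsA p hnA hmA
    obtain ⟨wq, hwq', hwqA, hwqB⟩ := cross hsA q.reverse hnA hmA
    have hwq : wq ∈ q.support := by
      rwa [support_reverse, List.mem_reverse] at hwq'
    have hwpI : wp ∈ ({w₁, w₂} : Set V) := by rw [← hinter]; exact ⟨hwpA, hwpB⟩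
    have hwqI : wq ∈ ({w₁, w₂} : Set V) := by rw [← hinter]; exact ⟨hwqA, hwqB⟩
    have hpq : p.append q = c₁ := take_spec c₁ hm₁
    have hne' : wp ≠ wq := by
      intro h
      subst h
      have h1 : wp ≠ n := fun h => hnB (by rw [← h]; exact hwpB)
      have h2 : wp ≠ m := fun h => hmA (by rw [← h]; exact hwpA)
      have htl : c₁.support.tail = p.support.tail ++ q.support.tail := by
        rw [← hpq, tail_support_append]
      have hdisj := List.disjoint_of_nodup_append (htl ▸ hc₁.support_nodup)
      have hwp' : wp ∈ p.support.tail := by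
        rw [support_eq_cons p] at hwp
        exact (List.mem_cons.mp hwp).resolve_left h1
      have hwq2 : wp ∈ q.support.tail := by
        rw [support_eq_cons q] at hwq
        exact (List.mem_cons.mp hwq).resolve_left h2
      exact hdisj hwp' hwq2
    have hwpc : wp ∈ c.support := by
      rw [← mem_rotate_support hn, ← hc₁def]
      rw [← hpq, mem_support_append_iff]
      exact Or.inl hwp
    have hwqc : wq ∈ c.support := by
      rw [← mem_rotate_support hn, ← hc₁def]
      rw [← hpq, mem_support_append_iff]
      exact Or.inr hwq
    rcases hwpI with h1 | h1 <;> rcases hwqI with h2 | h2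
    · exact absurd (h1.trans h2.symm) hne'
    · exact ⟨h1 ▸ hwpc, h2 ▸ hwqc⟩
    · exact ⟨h2 ▸ hwqc, h1 ▸ hwpc⟩
    · exact absurd (h1.trans h2.symm) hne'
  obtain ⟨hw1s, hw2s⟩ := key
  have hedge : s(w₁, w₂) ∈ c.edges := hcl w₁ w₂ hw hw1s hw2s
  set c₂ := c.rotate _ hw1s with hc₂def
  have hc₂ : c₂.IsCycle := hc.rotate hw1s
  have hedge₂ : s(w₁, w₂) ∈ c₂.edges :=
    ((c.rotate_edges _ hw1s).mem_iff).mpr hedge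
  obtain ⟨r, hrP, hrsub⟩ := cycleDecomp hne c₂ hc₂ hedge₂
  have hmr : m ∈ r.support := by
    have : m ∈ c₂.support := (mem_rotate_support hw1s).mpr hm
    rcases hrsub m this with h | h
    · exact absurd (h ▸ hmA) (by simpa [h] using hw1A)
    · exact h
  have hnr : n ∈ r.support := by
    have : n ∈ c₂.support := (mem_rotate_support hw1s).mpr hn
    rcases hrsub n this with h | h
    · exact absurd (h ▸ hnB) (by simpa [h] using hw1B)
    · exact h
  exact noMix hinter hcover hsA hsB hw1A hw1B hw2A hw2B r hrP m hmr hmA n hnr hnB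
end
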